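/- Every weak iterated function system on a compact metric space has at most one attractor: if s_1,…,s_k are weak contractions on a compact metric space X and A, B are nonempty compact sets with A = ⋃_i s_i[A] and B = ⋃_i s_i[B], then A = B. -/

import Mathlib

open Metric EMetric Set

/-- One-sided key estimate: for a weak contraction `s` and compact nonempty
sets `A, B` with `infDist a B ≤ D` for all `a ∈ A` and `0 < D`, the images
satisfy a strictly better bound. -/
lemma stmt12_side {X : Type*} [MetricSpace X] {s : X → X}
    (hs : ∀ x y : X, x ≠ y → dist (s x) (s y) < dist x y)
    {A B : Set X} (hAc : IsCompact A) (hBc : IsCompact B)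
    (hAne : A.Nonempty) (hBne : B.Nonempty)
    {D : ℝ} (hD : 0 < D) (hDle : ∀ a ∈ A, infDist a B ≤ D) :
    ∃ r, 0 ≤ r ∧ r < D ∧ ∀ a ∈ A, infDist (s a) (s '' B) ≤ r := by
  have hsc : Continuous s := by
    have : LipschitzWith 1 s := by
      intro x y
      rcases eq_or_ne x y with rfl | hxy
      · simp
      · rw [edist_dist, edist_dist, ENNReal.coe_one, one_mul]
        exact ENNReal.ofReal_le_ofReal (hs x y hxy).le
    exact this.continuous
  have hcont : ContinuousOn (fun a => infDist (s a) (s '' B)) A :=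
    ((continuous_infDist_pt (s '' B)).comp hsc).continuousOn
  obtain ⟨a0, ha0, hmax⟩ := hAc.exists_isMaxOn hAne hcont
  refine ⟨infDist (s a0) (s '' B), infDist_nonneg, ?_, fun a ha => hmax ha⟩
  obtain ⟨b, hb, hbd⟩ := hBc.exists_infDist_eq_dist hBne a0
  have hle : infDist (s a0) (s '' B) ≤ dist (s a0) (s b) :=
    infDist_le_dist_of_mem (mem_image_of_mem s hb)
  rcases eq_or_ne a0 b with rfl | hne
  · simpa using lt_of_le_of_lt hle (by simpa using hD)
  · calc infDist (s a0) (s '' B) ≤ dist (s a0) (s b) := hle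
      _ < dist a0 b := hs a0 b hne
      _ = infDist a0 B := hbd.symm
      _ ≤ D := hDle a0 ha0

/-- A weak iterated function system on a compact metric space has at most one
attractor: if `s_1, …, s_k` are weak contractions on a compact metric space `X`
and `A, B` are nonempty compact sets with `A = ⋃ᵢ sᵢ[A]` and `B = ⋃ᵢ sᵢ[B]`,
then `A = B`. -/
theorem stmt12 {X : Type*} [MetricSpace X] [CompactSpace X] (k : ℕ)
    (s : Fin k → X → X)
    (hs : ∀ i, ∀ x y : X, x ≠ y → dist (s i x) (s i y) < dist x y)
    (A B : Set X) (hAne : A.Nonempty) (hBne : B.Nonempty)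
    (hAc : IsCompact A) (hBc : IsCompact B)
    (hA : A = ⋃ i, s i '' A) (hB : B = ⋃ i, s i '' B) : A = B := by
  by_contra hne
  have hfin : hausdorffEdist A B ≠ ⊤ :=
    hausdorffEdist_ne_top_of_nonempty_of_bounded hAne hBne hAc.isBounded hBc.isBounded
  set D := hausdorffDist A B with hDdef
  have hD : 0 < D := by
    rcases lt_or_eq_of_le (hausdorffDist_nonneg : 0 ≤ D) with h | h
    · exact h
    · exact absurd ((hAc.isClosed.hausdorffDist_zero_iff_eq hBc.isClosed hfin).mp h.symm) hne
  -- per-map strict improvement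
  have hone : ∀ i, hausdorffDist (s i '' A) (s i '' B) < D := by
    intro i
    obtain ⟨r1, hr1n, hr1, hb1⟩ := stmt12_side (hs i) hAc hBc hAne hBne hD
      (fun a ha => infDist_le_hausdorffDist_of_mem ha hfin)
    obtain ⟨r2, hr2n, hr2, hb2⟩ := stmt12_side (hs i) hBc hAc hBne hAne hD
      (fun b hb => by
        have hfin' : hausdorffEDist B A ≠ ⊤ := by rwa [hausdorffEdist_comm]
        have := infDist_le_hausdorffDist_of_mem hb hfin'
        rwa [hausdorffDist_comm] at this)
    have : hausdorffDist (s i '' A) (s i '' B) ≤ max r1 r2 := by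
      apply hausdorffDist_le_of_infDist (le_max_of_le_left hr1n)
      · rintro x ⟨a, ha, rfl⟩
        exact le_max_of_le_left (hb1 a ha)
      · rintro x ⟨b, hb, rfl⟩
        exact le_max_of_le_right (hb2 b hb)
    exact lt_of_le_of_lt this (max_lt hr1 hr2)
  -- k positive
  have hk : 0 < k := by
    rcases Nat.eq_zero_or_pos k with rfl | h
    · rw [iUnion_of_empty] at hA
      exact absurd hA (Nonempty.ne_empty hAne)
    · exact h
  have i0 : Fin k := ⟨0, hk⟩
  set M : ℝ := Finset.univ.sup' (Finset.univ_nonempty_iff.mpr ⟨i0⟩)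
    (fun i => hausdorffDist (s i '' A) (s i '' B)) with hM
  have hMlt : M < D := (Finset.sup'_lt_iff _).mpr fun i _ => hone i
  have hMn : 0 ≤ M := le_trans hausdorffDist_nonneg
    (Finset.le_sup' (fun i => hausdorffDist (s i '' A) (s i '' B)) (Finset.mem_univ i0))
  have hDM : D ≤ M := by
    apply hausdorffDist_le_of_infDist hMn
    · intro x hx
      rw [hA] at hx
      obtain ⟨_, ⟨i, rfl⟩, a, ha, rfl⟩ := hx
      calc infDist (s i a) B ≤ infDist (s i a) (s i '' B) := by
            refine infDist_le_infDist_of_subset ?_ (hBne.image _)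
            conv_rhs => rw [hB]
            exact subset_iUnion (fun j => s j '' B) i
        _ ≤ hausdorffDist (s i '' A) (s i '' B) := by
            refine infDist_le_hausdorffDist_of_mem (mem_image_of_mem _ ha) ?_
            exact hausdorffEdist_ne_top_of_nonempty_of_bounded (hAne.image _) (hBne.image _)
              isBounded_of_compactSpace isBounded_of_compactSpace
        _ ≤ M := Finset.le_sup' (fun i => hausdorffDist (s i '' A) (s i '' B)) (Finset.mem_univ i)
    · intro x hx
      rw [hB] at hx
      obtain ⟨_, ⟨i, rfl⟩, b, hb, rfl⟩ := hx
      calc infDist (s i b) A ≤ infDist (s i b) (s i '' A) := by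
            refine infDist_le_infDist_of_subset ?_ (hAne.image _)
            conv_rhs => rw [hA]
            exact subset_iUnion (fun j => s j '' A) i
        _ ≤ hausdorffDist (s i '' A) (s i '' B) := by
            rw [hausdorffDist_comm]
            refine infDist_le_hausdorffDist_of_mem (mem_image_of_mem _ hb) ?_
            exact hausdorffEdist_ne_top_of_nonempty_of_bounded (hBne.image _) (hAne.image _)
              isBounded_of_compactSpace isBounded_of_compactSpace
        _ ≤ M := Finset.le_sup' (fun i => hausdorffDist (s i '' A) (s i '' B)) (Finset.mem_univ i)
  exact absurd (lt_of_le_of_lt hDM hMlt) (lt_irrefl D)
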